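/- If m = 2^v or m = 2^v - 1 for some v ∈ ℕ, then the ℓ^∞-separation radius of the first 2^m points of the two-dimensional Sobol' sequence equals 2^{-m-1}. -/

import Mathlib

open Finset

/-- The `i`-th binary digit of `n` (1-indexed: `n = Σ nᵢ 2^(i-1)`). -/
def bit (n i : ℕ) : ℕ := if Nat.testBit n (i-1) then 1 else 0

/-- `φ` of the digit vector of `n` truncated to `m` digits: `Σ nᵢ 2^(-i)`. -/
noncomputable def phi (m n : ℕ) : ℝ :=
  ∑ i ∈ Finset.Icc 1 m, (bit n i : ℝ) * (2:ℝ) ^ (-(i:ℤ))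

/-- The `i`-th coordinate of `P_m · (digit vector of n)` over `F₂`, where
`P_m[i][j] = C(j-1, i-1) mod 2` is the upper-triangular Pascal matrix. -/
def pbit (m n i : ℕ) : ℕ :=
  (∑ j ∈ Finset.Icc 1 m, (Nat.choose (j-1) (i-1) % 2) * bit n j) % 2

/-- `φ(P_m · n)`. -/
noncomputable def phiP (m n : ℕ) : ℝ :=
  ∑ i ∈ Finset.Icc 1 m, (pbit m n i : ℝ) * (2:ℝ) ^ (-(i:ℤ))

/-- The `n`-th point of the two-dimensional Sobol' sequence (with `n < 2^m`). -/
noncomputable def sobol (m n : ℕ) : ℝ × ℝ := (phi m n, phiP m n)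

/-- ℓ^∞ distance on ℝ². -/
noncomputable def linf (a b : ℝ × ℝ) : ℝ := max |a.1 - b.1| |a.2 - b.2|

/-- ℓ^∞ separation radius of the first `N` Sobol' points (digit length `m`). -/
noncomputable def sep (m N : ℕ) : ℝ :=
  (1/2) * sInf {d : ℝ | ∃ p q : ℕ, p < N ∧ q < N ∧ p ≠ q ∧ d = linf (sobol m p) (sobol m q)}

/-- ℓ^∞ covering radius of the first `N` Sobol' points (digit length `m`). -/
noncomputable def cov (m N : ℕ) : ℝ :=
  sSup {r : ℝ | ∃ x : ℝ × ℝ, x.1 ∈ Set.Icc (0:ℝ) 1 ∧ x.2 ∈ Set.Icc (0:ℝ) 1 ∧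
    r = sInf {d : ℝ | ∃ n : ℕ, n < N ∧ d = linf x (sobol m n)}}

section SobolAux
open Finset

private def Fv (m n : ℕ) : ℕ := ∑ i ∈ Finset.Icc 1 m, bit n i * 2 ^ (m - i)

private lemma sob_bit_le (n i : ℕ) : bit n i ≤ 1 := by unfold bit; split <;> simp

private lemma sob_Fv_succ (m n : ℕ) : Fv (m+1) n = 2 * Fv m n + bit n (m+1) := by
  unfold Fv
  rw [Finset.sum_Icc_succ_top (by omega)]
  have : ∀ i ∈ Finset.Icc 1 m, bit n i * 2 ^ (m + 1 - i) = 2 * (bit n i * 2 ^ (m - i)) := by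
    intro i hi
    simp only [Finset.mem_Icc] at hi
    have : m + 1 - i = (m - i) + 1 := by omega
    rw [this, pow_succ]; ring
  rw [Finset.sum_congr rfl this, ← Finset.mul_sum]
  simp

private lemma sob_phi_succ (m n : ℕ) :
    phi (m+1) n = phi m n + (bit n (m+1) : ℝ) * (2:ℝ) ^ (-((m:ℤ)+1)) := by
  unfold phi
  rw [Finset.sum_Icc_succ_top (by omega)]
  push_cast
  ring_nf

private lemma sob_phi_eq_Fv (m n : ℕ) : phi m n = (Fv m n : ℝ) * (2:ℝ) ^ (-(m:ℤ)) := by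
  induction m with
  | zero => simp [phi, Fv]
  | succ m ih =>
      rw [sob_phi_succ, ih, sob_Fv_succ]
      push_cast
      have h1 : ((2:ℝ)) ^ (-(m:ℤ)) = 2 * (2:ℝ) ^ (-((m:ℤ)+1)) := by
        rw [show -(m:ℤ) = (-((m:ℤ)+1)) + 1 by ring, zpow_add₀ (by norm_num)]
        ring
      rw [h1]; ring

private lemma sob_bits_eq_of_Fv_eq :
    ∀ m p q, Fv m p = Fv m q → ∀ i ∈ Finset.Icc 1 m, bit p i = bit q i := by
  intro m
  induction m with
  | zero => intro p q _ i hi; simp at hi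
  | succ m ih =>
      intro p q hF i hi
      rw [sob_Fv_succ, sob_Fv_succ] at hF
      have hb1 := sob_bit_le p (m+1); have hb2 := sob_bit_le q (m+1)
      have h1 : bit p (m+1) = bit q (m+1) := by omega
      have h2 : Fv m p = Fv m q := by omega
      simp only [Finset.mem_Icc] at hi
      rcases Nat.lt_or_ge i (m+1) with h | h
      · exact ih p q h2 i (Finset.mem_Icc.mpr ⟨hi.1, by omega⟩)
      · have : i = m + 1 := by omega
        rw [this]; exact h1

private lemma sob_Fv_inj {m p q : ℕ} (hp : p < 2^m) (hq : q < 2^m) (h : Fv m p = Fv m q) :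
    p = q := by
  apply Nat.eq_of_testBit_eq
  intro k
  rcases Nat.lt_or_ge k m with hk | hk
  · have := sob_bits_eq_of_Fv_eq m p q h (k+1) (Finset.mem_Icc.mpr ⟨by omega, by omega⟩)
    unfold bit at this
    simp only [Nat.add_sub_cancel] at this
    by_cases h1 : Nat.testBit p k <;> by_cases h2 : Nat.testBit q k <;>
      simp [h1, h2] at this ⊢
  · rw [Nat.testBit_lt_two_pow (lt_of_lt_of_le hp (Nat.pow_le_pow_right (by norm_num) hk)),
        Nat.testBit_lt_two_pow (lt_of_lt_of_le hq (Nat.pow_le_pow_right (by norm_num) hk))]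

private lemma sob_phi_apart {m p q : ℕ} (hp : p < 2^m) (hq : q < 2^m) (hne : p ≠ q) :
    (2:ℝ) ^ (-(m:ℤ)) ≤ |phi m p - phi m q| := by
  rw [sob_phi_eq_Fv, sob_phi_eq_Fv, ← sub_mul, abs_mul,
    abs_of_pos (zpow_pos (by norm_num : (0:ℝ)<2) _)]
  have hF : Fv m p ≠ Fv m q := fun h => hne (sob_Fv_inj hp hq h)
  have h1 : (1:ℝ) ≤ |(Fv m p : ℝ) - (Fv m q : ℝ)| := by
    have h0 : ((Fv m p : ℤ)) ≠ (Fv m q : ℤ) := by exact_mod_cast hF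
    have h2 := Int.one_le_abs (sub_ne_zero.mpr h0)
    calc (1:ℝ) ≤ |((Fv m p : ℤ) - (Fv m q : ℤ) : ℤ)| := by exact_mod_cast h2
    _ = |(Fv m p : ℝ) - (Fv m q : ℝ)| := by push_cast; rfl
  nlinarith [zpow_pos (by norm_num : (0:ℝ)<2) (-(m:ℤ)), abs_nonneg ((Fv m p : ℝ) - Fv m q)]

private lemma sob_geom_sum (m : ℕ) :
    ∑ i ∈ Finset.Icc 1 m, (2:ℝ) ^ (-(i:ℤ)) = 1 - (2:ℝ)^(-(m:ℤ)) := by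
  induction m with
  | zero => simp
  | succ m ih =>
      rw [Finset.sum_Icc_succ_top (by omega), ih]
      have h1 : ((2:ℝ)) ^ (-(m:ℤ)) = 2 * (2:ℝ) ^ (-((m:ℤ)+1)) := by
        rw [show -(m:ℤ) = (-((m:ℤ)+1)) + 1 by ring, zpow_add₀ (by norm_num)]; ring
      push_cast
      rw [h1]; ring

private lemma sob_sum_ind_one (m : ℕ) (hm : 1 ≤ m) (g : ℕ → ℕ)
    (hg : ∀ i ∈ Finset.Icc 1 m, g i = if i = 1 then 1 else 0) :
    ∑ i ∈ Finset.Icc 1 m, (g i : ℝ) * (2:ℝ) ^ (-(i:ℤ)) = 1/2 := by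
  rw [Finset.sum_eq_single_of_mem 1 (Finset.mem_Icc.mpr ⟨le_refl _, hm⟩)]
  · rw [hg 1 (Finset.mem_Icc.mpr ⟨le_refl _, hm⟩)]; norm_num
  · intro i hi hne
    rw [hg i hi]; simp [hne]

private lemma sob_sum_ind_compl (m : ℕ) (hm : 1 ≤ m) (g : ℕ → ℕ)
    (hg : ∀ i ∈ Finset.Icc 1 m, g i = if i = 1 then 0 else 1) :
    ∑ i ∈ Finset.Icc 1 m, (g i : ℝ) * (2:ℝ) ^ (-(i:ℤ)) = 1/2 - (2:ℝ)^(-(m:ℤ)) := by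
  have key : ∀ i ∈ Finset.Icc 1 m, (g i : ℝ) * (2:ℝ) ^ (-(i:ℤ))
      = (2:ℝ) ^ (-(i:ℤ)) - (if i = 1 then 1 else 0 : ℕ) * (2:ℝ) ^ (-(i:ℤ)) := by
    intro i hi
    rw [hg i hi]
    by_cases h : i = 1 <;> simp [h]
  rw [Finset.sum_congr rfl key, Finset.sum_sub_distrib, sob_geom_sum,
      sob_sum_ind_one m hm _ (fun i _ => rfl)]
  ring

private lemma sob_sum_ind_two (m : ℕ) (hm : 2 ≤ m) (g : ℕ → ℕ)
    (hg : ∀ i ∈ Finset.Icc 1 m, g i = if i = 1 ∨ i = m then 1 else 0) :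
    ∑ i ∈ Finset.Icc 1 m, (g i : ℝ) * (2:ℝ) ^ (-(i:ℤ)) = 1/2 + (2:ℝ)^(-(m:ℤ)) := by
  have hmem : m ∈ Finset.Icc 1 m := Finset.mem_Icc.mpr ⟨by omega, le_refl _⟩
  rw [← Finset.sum_erase_add _ _ hmem, hg m hmem]
  have h2 : ∑ i ∈ (Finset.Icc 1 m).erase m, (g i : ℝ) * (2:ℝ) ^ (-(i:ℤ)) = 1/2 := by
    rw [Finset.sum_eq_single_of_mem 1
      (Finset.mem_erase.mpr ⟨by omega, Finset.mem_Icc.mpr ⟨le_refl _, by omega⟩⟩)]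
    · rw [hg 1 (Finset.mem_Icc.mpr ⟨le_refl _, by omega⟩)]; norm_num
    · intro i hi hne
      have h1 := Finset.mem_erase.mp hi
      rw [hg i h1.2]
      simp [hne, h1.1]
  rw [h2]
  simp

private lemma sob_choose_pow_sub_one_odd :
    ∀ v k : ℕ, k ≤ 2^v - 1 → Nat.choose (2^v - 1) k % 2 = 1 := by
  intro v
  induction v with
  | zero => intro k hk; interval_cases k; simp
  | succ v ih =>
      intro k hk
      haveI : Fact (Nat.Prime 2) := ⟨Nat.prime_two⟩
      have hmod := @Choose.choose_modEq_choose_mod_mul_choose_div_nat (2^(v+1)-1) k 2 _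
      have h2 : (2:ℕ)^(v+1) = 2 * 2^v := by ring
      have hv : 1 ≤ (2:ℕ)^v := Nat.one_le_two_pow
      have hn2 : (2^(v+1)-1) % 2 = 1 := by omega
      have hnd : (2^(v+1)-1) / 2 = 2^v - 1 := by omega
      rw [hn2, hnd] at hmod
      have hk2 : k % 2 ≤ 1 := by omega
      have hc1 : Nat.choose 1 (k % 2) = 1 := by interval_cases h : k % 2 <;> simp
      rw [hc1, one_mul] at hmod
      have hkd : k / 2 ≤ 2^v - 1 := by omega
      have := ih (k/2) hkd
      unfold Nat.ModEq at hmod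
      omega

private lemma sob_cast_choose_odd {v k : ℕ} (hk : k ≤ 2^v - 1) :
    ((Nat.choose (2^v - 1) k : ℕ) : ZMod 2) = 1 := by
  rw [← ZMod.natCast_mod, sob_choose_pow_sub_one_odd v k hk]
  rfl

private lemma sob_choose_zero_left (k : ℕ) : Nat.choose 0 k = if k = 0 then 1 else 0 := by
  cases k <;> simp

private lemma sob_bit_one {i : ℕ} (hi : 1 ≤ i) : bit 1 i = if i = 1 then 1 else 0 := by
  unfold bit
  obtain ⟨k, rfl⟩ : ∃ k, i = k + 1 := ⟨i - 1, by omega⟩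
  cases k with
  | zero => simp
  | succ k => simp [Nat.testBit_succ]

private lemma sob_bitA {m j : ℕ} (hm : 2 ≤ m) (hj : 1 ≤ j) :
    bit (2^(m-1)+1) j = if j = 1 ∨ j = m then 1 else 0 := by
  unfold bit
  obtain ⟨b, hb⟩ : ∃ b, m - 1 = b + 1 := ⟨m - 2, by omega⟩
  rw [hb]
  have h2 : (2:ℕ)^(b+1) = 2 * 2^b := by ring
  obtain ⟨k, rfl⟩ : ∃ k, j = k + 1 := ⟨j - 1, by omega⟩
  cases k with
  | zero => simp [Nat.testBit_zero]; omega
  | succ k =>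
      simp only [Nat.add_sub_cancel, Nat.testBit_succ]
      have hdiv : (2^(b+1) + 1)/2 = 2^b := by omega
      rw [hdiv, Nat.testBit_two_pow]
      have heq : (k + 1 + 1 = 1 ∨ k + 1 + 1 = m) ↔ (b = k) := by omega
      simp only [heq]
      by_cases h : b = k <;> simp [h]

private lemma sob_bitB {m j : ℕ} (hm : 1 ≤ m) (hj1 : 1 ≤ j) (hjm : j ≤ m) :
    bit (2^m - 2) j = if j = 1 then 0 else 1 := by
  unfold bit
  have key : 2^m - 2 = 2 * (2^(m-1) - 1) := by
    have : (2:ℕ)^m = 2 * 2^(m-1) := by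
      rw [← pow_succ']
      congr 1
      omega
    omega
  rw [key]
  obtain ⟨k, rfl⟩ : ∃ k, j = k + 1 := ⟨j - 1, by omega⟩
  cases k with
  | zero => simp [Nat.testBit_zero]
  | succ k =>
      simp only [Nat.add_sub_cancel, Nat.testBit_succ]
      have hdd : 2 * (2^(m-1) - 1) / 2 = 2^(m-1) - 1 := by omega
      rw [hdd, Nat.testBit_two_pow_sub_one]
      have : k < m - 1 := by omega
      simp [this]

private lemma sob_pbit_lt (m n i : ℕ) : pbit m n i < 2 := Nat.mod_lt _ (by norm_num)

private lemma sob_pbit_eq_val (m n i : ℕ) :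
    pbit m n i = ((∑ j ∈ Finset.Icc 1 m,
      (Nat.choose (j-1) (i-1) : ZMod 2) * (bit n j : ZMod 2)) : ZMod 2).val := by
  have h1 : ((pbit m n i : ℕ) : ZMod 2)
      = ∑ j ∈ Finset.Icc 1 m, (Nat.choose (j-1) (i-1) : ZMod 2) * (bit n j : ZMod 2) := by
    unfold pbit
    rw [ZMod.natCast_mod, Nat.cast_sum]
    refine Finset.sum_congr rfl fun j _ => ?_
    rw [Nat.cast_mul, ZMod.natCast_mod]
  rw [← h1, ZMod.val_natCast_of_lt (sob_pbit_lt m n i)]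

private lemma sob_pbit_one_val {m i : ℕ} (hm : 1 ≤ m) (hi : 1 ≤ i) :
    pbit m 1 i = if i = 1 then 1 else 0 := by
  rw [sob_pbit_eq_val]
  have hsum : (∑ j ∈ Finset.Icc 1 m,
      (Nat.choose (j-1) (i-1) : ZMod 2) * (bit 1 j : ZMod 2))
      = (Nat.choose 0 (i-1) : ZMod 2) := by
    rw [Finset.sum_eq_single_of_mem 1 (Finset.mem_Icc.mpr ⟨le_refl _, hm⟩)]
    · rw [sob_bit_one (le_refl 1)]; simp
    · intro j hj hne
      rw [sob_bit_one (Finset.mem_Icc.mp hj).1]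
      simp [hne]
  rw [hsum, sob_choose_zero_left]
  by_cases h : i = 1
  · simp [h, ZMod.val_one]
  · have : i - 1 ≠ 0 := by omega
    simp [h, this]

private lemma sob_pbitA {v m i : ℕ} (hv : 1 ≤ v) (hm : m = 2^v) (hi1 : 1 ≤ i) (him : i ≤ m) :
    pbit m (2^(m-1)+1) i = if i = 1 then 0 else 1 := by
  have hm2 : 2 ≤ m := by
    rw [hm]
    calc 2 = 2^1 := rfl
    _ ≤ 2^v := Nat.pow_le_pow_right (by norm_num) hv
  rw [sob_pbit_eq_val]
  have hmem : m ∈ Finset.Icc 1 m := Finset.mem_Icc.mpr ⟨by omega, le_refl _⟩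
  have hsum : (∑ j ∈ Finset.Icc 1 m,
      (Nat.choose (j-1) (i-1) : ZMod 2) * (bit (2^(m-1)+1) j : ZMod 2))
      = (Nat.choose 0 (i-1) : ZMod 2) + (Nat.choose (m-1) (i-1) : ZMod 2) := by
    rw [← Finset.sum_erase_add _ _ hmem, sob_bitA hm2 (by omega)]
    have h2 : ∑ j ∈ (Finset.Icc 1 m).erase m,
        (Nat.choose (j-1) (i-1) : ZMod 2) * (bit (2^(m-1)+1) j : ZMod 2)
        = (Nat.choose 0 (i-1) : ZMod 2) := by
      rw [Finset.sum_eq_single_of_mem 1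
        (Finset.mem_erase.mpr ⟨by omega, Finset.mem_Icc.mpr ⟨le_refl _, by omega⟩⟩)]
      · rw [sob_bitA hm2 (le_refl 1)]; simp
      · intro j hj hne
        have h1 := Finset.mem_erase.mp hj
        rw [sob_bitA hm2 (Finset.mem_Icc.mp h1.2).1]
        simp [hne, h1.1]
    rw [h2]
    simp
  rw [hsum, sob_choose_zero_left]
  have hodd : ((Nat.choose (m-1) (i-1) : ℕ) : ZMod 2) = 1 := by
    have heq : m - 1 = 2^v - 1 := by omega
    rw [heq]
    exact sob_cast_choose_odd (by omega)
  rw [hodd]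
  by_cases h : i = 1
  · simp [h]; rfl
  · have : i - 1 ≠ 0 := by omega
    simp [h, this]
    rfl

private lemma sob_natsum_reindex (m i : ℕ) (hm : 1 ≤ m) :
    ∑ j ∈ Finset.Icc 2 m, Nat.choose (j-1) (i-1)
      = ∑ k ∈ Finset.Icc 1 (m-1), Nat.choose k (i-1) := by
  have hmap : Finset.map (addRightEmbedding 1) (Finset.Icc 1 (m-1)) = Finset.Icc 2 m := by
    rw [Finset.map_add_right_Icc]
    congr 1
    omega
  rw [← hmap, Finset.sum_map]
  refine Finset.sum_congr rfl fun k _ => ?_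
  simp [addRightEmbedding]

private lemma sob_natsum_hockey {m i : ℕ} (hi2 : 2 ≤ i) (him : i ≤ m) :
    ∑ k ∈ Finset.Icc 1 (m-1), Nat.choose k (i-1) = Nat.choose m i := by
  have hsub : Finset.Icc (i-1) (m-1) ⊆ Finset.Icc 1 (m-1) := by
    intro x hx
    simp only [Finset.mem_Icc] at hx ⊢
    omega
  rw [← Finset.sum_subset hsub (by
    intro x hx hnx
    simp only [Finset.mem_Icc] at hx hnx
    exact Nat.choose_eq_zero_of_lt (by omega))]
  rw [Nat.sum_Icc_choose]
  congr 1 <;> omega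

private lemma sob_pbitB {v m i : ℕ} (hv : 1 ≤ v) (hm : m = 2^v - 1) (hi1 : 1 ≤ i) (him : i ≤ m) :
    pbit m (2^m - 2) i = if i = 1 then 0 else 1 := by
  have hm1 : 1 ≤ m := by
    rw [hm]
    have : (2:ℕ)^1 ≤ 2^v := Nat.pow_le_pow_right (by norm_num) hv
    omega
  rw [sob_pbit_eq_val]
  have hIcc : Finset.Icc 1 m = insert 1 (Finset.Icc 2 m) := by
    ext x
    simp only [Finset.mem_Icc, Finset.mem_insert]
    omega
  have hnotmem : (1:ℕ) ∉ Finset.Icc 2 m := by simp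
  have hsum : (∑ j ∈ Finset.Icc 1 m,
      (Nat.choose (j-1) (i-1) : ZMod 2) * (bit (2^m - 2) j : ZMod 2))
      = ((∑ j ∈ Finset.Icc 2 m, Nat.choose (j-1) (i-1) : ℕ) : ZMod 2) := by
    have step1 : ∀ j ∈ Finset.Icc 1 m,
        (Nat.choose (j-1) (i-1) : ZMod 2) * (bit (2^m - 2) j : ZMod 2)
        = (if j = 1 then (0:ZMod 2) else (Nat.choose (j-1) (i-1) : ZMod 2)) := by
      intro j hj
      simp only [Finset.mem_Icc] at hj
      rw [sob_bitB hm1 hj.1 hj.2]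
      by_cases h : j = 1 <;> simp [h]
    rw [Finset.sum_congr rfl step1, hIcc, Finset.sum_insert hnotmem, if_pos rfl, zero_add]
    push_cast
    refine Finset.sum_congr rfl fun j hj => ?_
    simp only [Finset.mem_Icc] at hj
    rw [if_neg (by omega)]
  rw [hsum, sob_natsum_reindex m i hm1]
  by_cases h : i = 1
  · subst h
    have hone : ∑ k ∈ Finset.Icc 1 (m-1), Nat.choose k 0 = m - 1 := by
      simp [Nat.choose_zero_right]
    rw [hone]
    have heven : (m - 1) % 2 = 0 := by
      have : (2:ℕ)^v = 2 * 2^(v-1) := by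
        rw [← pow_succ']; congr 1; omega
      omega
    rw [← ZMod.natCast_mod, heven]
    simp
  · rw [sob_natsum_hockey (by omega) him]
    have hodd : ((Nat.choose m i : ℕ) : ZMod 2) = 1 := by
      rw [hm]; exact sob_cast_choose_odd (by omega)
    rw [hodd]
    simp [h, ZMod.val_one]

end SobolAux
theorem stmt_17 (m v : ℕ) (hv : 1 ≤ v) (h : m = 2 ^ v ∨ m = 2 ^ v - 1) :
    sep m (2 ^ m) = (2:ℝ) ^ (-(m:ℤ) - 1) := by
  have hv2 : (2:ℕ)^1 ≤ 2^v := Nat.pow_le_pow_right (by norm_num) hv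
  have hm1 : 1 ≤ m := by rcases h with h | h <;> omega
  set e : ℝ := (2:ℝ)^(-(m:ℤ)) with he
  have he0 : 0 < e := zpow_pos (by norm_num : (0:ℝ) < 2) _
  have hphi1 : phi m 1 = 1/2 := by
    unfold phi
    exact sob_sum_ind_one m hm1 (bit 1)
      (fun i hi => sob_bit_one (Finset.mem_Icc.mp hi).1)
  have hphiP1 : phiP m 1 = 1/2 := by
    unfold phiP
    exact sob_sum_ind_one m hm1 (pbit m 1)
      (fun i hi => sob_pbit_one_val hm1 (Finset.mem_Icc.mp hi).1)
  -- witness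
  obtain ⟨q, hqlt, hqne, habs1, habs2⟩ :
      ∃ q, q < 2^m ∧ q ≠ 1 ∧ |phi m 1 - phi m q| = e ∧ |phiP m 1 - phiP m q| = e := by
    rcases h with hA | hB
    · -- m = 2^v
      have hm2 : 2 ≤ m := by omega
      refine ⟨2^(m-1)+1, ?_, ?_, ?_, ?_⟩
      · have h1 : (2:ℕ)^m = 2 * 2^(m-1) := by
          rw [← pow_succ']; congr 1; omega
        have h2 : 2 ≤ (2:ℕ)^(m-1) := by
          calc (2:ℕ) = 2^1 := rfl
          _ ≤ 2^(m-1) := Nat.pow_le_pow_right (by norm_num) (by omega)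
        omega
      · have h2 : 1 ≤ (2:ℕ)^(m-1) := Nat.one_le_two_pow
        omega
      · have hq : phi m (2^(m-1)+1) = 1/2 + e := by
          unfold phi
          exact sob_sum_ind_two m hm2 _
            (fun i hi => sob_bitA hm2 (Finset.mem_Icc.mp hi).1)
        rw [hphi1, hq]
        rw [show (1:ℝ)/2 - (1/2 + e) = -e by ring, abs_neg, abs_of_pos he0]
      · have hq : phiP m (2^(m-1)+1) = 1/2 - e := by
          unfold phiP
          exact sob_sum_ind_compl m hm1 _
            (fun i hi => sob_pbitA hv hA (Finset.mem_Icc.mp hi).1 (Finset.mem_Icc.mp hi).2)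
        rw [hphiP1, hq]
        rw [show (1:ℝ)/2 - (1/2 - e) = e by ring, abs_of_pos he0]
    · -- m = 2^v - 1
      refine ⟨2^m - 2, ?_, ?_, ?_, ?_⟩
      · have h2 : 2 ≤ (2:ℕ)^m := by
          calc (2:ℕ) = 2^1 := rfl
          _ ≤ 2^m := Nat.pow_le_pow_right (by norm_num) hm1
        omega
      · have h1 : (2:ℕ)^m = 2 * 2^(m-1) := by
          rw [← pow_succ']; congr 1; omega
        omega
      · have hq : phi m (2^m - 2) = 1/2 - e := by
          unfold phi
          exact sob_sum_ind_compl m hm1 _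
            (fun i hi => sob_bitB hm1 (Finset.mem_Icc.mp hi).1 (Finset.mem_Icc.mp hi).2)
        rw [hphi1, hq]
        rw [show (1:ℝ)/2 - (1/2 - e) = e by ring, abs_of_pos he0]
      · have hq : phiP m (2^m - 2) = 1/2 - e := by
          unfold phiP
          exact sob_sum_ind_compl m hm1 _
            (fun i hi => sob_pbitB hv hB (Finset.mem_Icc.mp hi).1 (Finset.mem_Icc.mp hi).2)
        rw [hphiP1, hq]
        rw [show (1:ℝ)/2 - (1/2 - e) = e by ring, abs_of_pos he0]
  have hdist : linf (sobol m 1) (sobol m q) = e := by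
    unfold linf sobol
    simp only
    rw [habs1, habs2, max_self]
  set S : Set ℝ :=
    {d : ℝ | ∃ p q : ℕ, p < 2^m ∧ q < 2^m ∧ p ≠ q ∧ d = linf (sobol m p) (sobol m q)} with hSdef
  have hlb : ∀ d ∈ S, e ≤ d := by
    rintro d ⟨p, r, hp, hr, hne, rfl⟩
    calc e ≤ |phi m p - phi m r| := sob_phi_apart hp hr hne
    _ ≤ linf (sobol m p) (sobol m r) := le_max_left _ _
  have hmem : e ∈ S := by
    refine ⟨1, q, ?_, hqlt, fun hh => hqne hh.symm, hdist.symm⟩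
    exact Nat.one_lt_two_pow (by omega)
  have hinf : sInf S = e :=
    le_antisymm (csInf_le ⟨e, hlb⟩ hmem) (le_csInf ⟨e, hmem⟩ hlb)
  unfold sep
  rw [← hSdef, hinf]
  rw [he, show -(m:ℤ) - 1 = -(m:ℤ) + (-1) by ring, zpow_add₀ (by norm_num : (2:ℝ) ≠ 0)]
  norm_num
  ring
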